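/- Assume complete vertical transmission v_w = 1 (so v_u = 0) and R_0w = b_f ψ φ_w/((μ_a+ψ)μ_fw) > 1. Then every eigenvalue (over ℂ) of the derivative (6×6 Jacobian matrix) of the Wolbachia mosquito model vector field, evaluated at the complete-infection equilibrium (0, K_a(1 − 1/R_0w), 0, b_f ψ A_w/μ_fw, 0, b_m ψ A_w/μ_mw) with A_w = K_a(1 − 1/R_0w), has negative real part (so the complete-infection equilibrium is locally asymptotically stable). -/

import Mathlib

/-- The Wolbachia mosquito model vector field on states
`x = (A_u, A_w, F_u, F_w, M_u, M_w)` (indices 0..5). -/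
noncomputable def wolbField (bf vw φu φw ψ μa μfu μfw μmu μmw Ka : ℝ)
    (x : Fin 6 → ℝ) : Fin 6 → ℝ :=
  ![ φu * x 2 * (x 4 / (x 4 + x 5)) * (1 - (x 0 + x 1) / Ka)
      + (1 - vw) * (φw * x 3 * (x 4 / (x 4 + x 5)) * (1 - (x 0 + x 1) / Ka)
          + φw * x 3 * (1 - x 4 / (x 4 + x 5)) * (1 - (x 0 + x 1) / Ka))
      - (μa + ψ) * x 0,
    vw * (φw * x 3 * (x 4 / (x 4 + x 5)) * (1 - (x 0 + x 1) / Ka)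
          + φw * x 3 * (1 - x 4 / (x 4 + x 5)) * (1 - (x 0 + x 1) / Ka))
      - (μa + ψ) * x 1,
    bf * ψ * x 0 - μfu * x 2,
    bf * ψ * x 1 - μfw * x 3,
    (1 - bf) * ψ * x 0 - μmu * x 4,
    (1 - bf) * ψ * x 1 - μmw * x 5 ]

namespace WolbAux

@[simp] lemma fv0 : ((0 : Fin 6) : ℕ) = 0 := rfl
@[simp] lemma fv1 : ((1 : Fin 6) : ℕ) = 1 := rfl
@[simp] lemma fv2 : ((2 : Fin 6) : ℕ) = 2 := rfl
@[simp] lemma fv3 : ((3 : Fin 6) : ℕ) = 3 := rfl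
@[simp] lemma fv4 : ((4 : Fin 6) : ℕ) = 4 := rfl
@[simp] lemma fv5 : ((5 : Fin 6) : ℕ) = 5 := rfl

@[simp] lemma vec6_0 {α : Type*} (a b c d e f : α) : ![a,b,c,d,e,f] 0 = a := rfl
@[simp] lemma vec6_1 {α : Type*} (a b c d e f : α) : ![a,b,c,d,e,f] 1 = b := rfl
@[simp] lemma vec6_2 {α : Type*} (a b c d e f : α) : ![a,b,c,d,e,f] 2 = c := rfl
@[simp] lemma vec6_3 {α : Type*} (a b c d e f : α) : ![a,b,c,d,e,f] 3 = d := rfl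
@[simp] lemma vec6_4 {α : Type*} (a b c d e f : α) : ![a,b,c,d,e,f] 4 = e := rfl
@[simp] lemma vec6_5 {α : Type*} (a b c d e f : α) : ![a,b,c,d,e,f] 5 = f := rfl

/-- If `z² + pz + q = 0` with `p, q > 0` real, then `Re z < 0`. -/
lemma quad_root_re_neg {p q : ℝ} (hp : 0 < p) (hq : 0 < q) {z : ℂ}
    (h : z^2 + (p:ℂ)*z + (q:ℂ) = 0) : z.re < 0 := by
  by_contra h0
  push_neg at h0
  rw [Complex.ext_iff] at h
  obtain ⟨h1, h2⟩ := h
  simp [pow_two, Complex.mul_re, Complex.mul_im, Complex.add_re, Complex.add_im] at h1 h2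
  have him : z.im = 0 := by
    rcases mul_eq_zero.mp (show z.im * (2*z.re + p) = 0 by linarith) with h' | h'
    · exact h'
    · nlinarith
  nlinarith [sq_nonneg z.re]

noncomputable def pr (i : Fin 6) : (Fin 6 → ℝ) →L[ℝ] ℝ := ContinuousLinearMap.proj i

@[simp] lemma pr_apply (i : Fin 6) (y : Fin 6 → ℝ) : pr i y = y i := rfl

noncomputable def Lmap (bf φw ψ μa μfu μfw μmu μmw Ka Aw : ℝ) :
    Fin 6 → ((Fin 6 → ℝ) →L[ℝ] ℝ) :=
  ![ (-(μa + ψ)) • pr 0,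
     (-(φw * (bf * ψ * Aw / μfw) / Ka)) • pr 0
       + (-(φw * (bf * ψ * Aw / μfw) / Ka) - (μa + ψ)) • pr 1
       + (φw * (1 - Aw / Ka)) • pr 3,
     (bf * ψ) • pr 0 + (-μfu) • pr 2,
     (bf * ψ) • pr 1 + (-μfw) • pr 3,
     ((1 - bf) * ψ) • pr 0 + (-μmu) • pr 4,
     ((1 - bf) * ψ) • pr 1 + (-μmw) • pr 5 ]

noncomputable def Mmat (bf φw ψ μa μfu μfw μmu μmw Ka Aw : ℝ) : Matrix (Fin 6) (Fin 6) ℝ :=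
  Matrix.of ![![-(μa+ψ), 0, 0, 0, 0, 0],
    ![-(φw*(bf*ψ*Aw/μfw)/Ka), -(φw*(bf*ψ*Aw/μfw)/Ka) - (μa+ψ), 0, φw*(1-Aw/Ka), 0, 0],
    ![bf*ψ, 0, -μfu, 0, 0, 0],
    ![0, bf*ψ, 0, -μfw, 0, 0],
    ![(1-bf)*ψ, 0, 0, 0, -μmu, 0],
    ![0, (1-bf)*ψ, 0, 0, 0, -μmw]]

lemma hasFDeriv_wolb (bf φu φw ψ μa μfu μfw μmu μmw Ka Aw : ℝ)
    (hMw : (1 - bf) * ψ * Aw / μmw ≠ 0) :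
    HasFDerivAt (wolbField bf 1 φu φw ψ μa μfu μfw μmu μmw Ka)
      (ContinuousLinearMap.pi (Lmap bf φw ψ μa μfu μfw μmu μmw Ka Aw))
      ![0, Aw, 0, bf * ψ * Aw / μfw, 0, (1 - bf) * ψ * Aw / μmw] := by
  set x0 : Fin 6 → ℝ := ![0, Aw, 0, bf * ψ * Aw / μfw, 0, (1 - bf) * ψ * Aw / μmw] with hx0
  have h0 : HasFDerivAt (fun x : Fin 6 → ℝ => x 0) (pr 0) x0 := hasFDerivAt_apply 0 x0
  have h1 : HasFDerivAt (fun x : Fin 6 → ℝ => x 1) (pr 1) x0 := hasFDerivAt_apply 1 x0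
  have h2 : HasFDerivAt (fun x : Fin 6 → ℝ => x 2) (pr 2) x0 := hasFDerivAt_apply 2 x0
  have h3 : HasFDerivAt (fun x : Fin 6 → ℝ => x 3) (pr 3) x0 := hasFDerivAt_apply 3 x0
  have h4 : HasFDerivAt (fun x : Fin 6 → ℝ => x 4) (pr 4) x0 := hasFDerivAt_apply 4 x0
  have h5 : HasFDerivAt (fun x : Fin 6 → ℝ => x 5) (pr 5) x0 := hasFDerivAt_apply 5 x0
  have hv0 : x0 0 = 0 := rfl
  have hv1 : x0 1 = Aw := rfl
  have hv2 : x0 2 = 0 := rfl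
  have hv3 : x0 3 = bf * ψ * Aw / μfw := rfl
  have hv4 : x0 4 = 0 := rfl
  have hv5 : x0 5 = (1 - bf) * ψ * Aw / μmw := rfl
  have hs : x0 4 + x0 5 ≠ 0 := by rw [hv4, hv5]; simpa using hMw
  have hsum : HasFDerivAt (fun x : Fin 6 → ℝ => x 4 + x 5) (pr 4 + pr 5) x0 := h4.add h5
  have hinv : HasFDerivAt (fun x : Fin 6 → ℝ => (x 4 + x 5)⁻¹)
      ((-((x0 4 + x0 5) ^ 2)⁻¹) • (pr 4 + pr 5)) x0 := by
    simpa [Function.comp_def] using (hasDerivAt_inv hs).comp_hasFDerivAt x0 hsum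
  have hQ : HasFDerivAt (fun x : Fin 6 → ℝ => x 4 / (x 4 + x 5))
      (x0 4 • ((-((x0 4 + x0 5) ^ 2)⁻¹) • (pr 4 + pr 5)) + (x0 4 + x0 5)⁻¹ • pr 4) x0 := by
    simp only [div_eq_mul_inv]
    exact h4.mul hinv
  have hq : HasFDerivAt (fun x : Fin 6 → ℝ => 1 - (x 0 + x 1) / Ka)
      (-(Ka⁻¹ • (pr 0 + pr 1))) x0 := by
    simp only [div_eq_mul_inv]
    simpa using ((h0.add h1).mul_const Ka⁻¹).const_sub 1
  apply hasFDerivAt_pi'.2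
  intro i
  rw [ContinuousLinearMap.proj_pi]
  fin_cases i
  · show HasFDerivAt (fun x : Fin 6 → ℝ =>
        φu * x 2 * (x 4 / (x 4 + x 5)) * (1 - (x 0 + x 1) / Ka)
        + (1 - 1) * (φw * x 3 * (x 4 / (x 4 + x 5)) * (1 - (x 0 + x 1) / Ka)
            + φw * x 3 * (1 - x 4 / (x 4 + x 5)) * (1 - (x 0 + x 1) / Ka))
        - (μa + ψ) * x 0) (Lmap bf φw ψ μa μfu μfw μmu μmw Ka Aw 0) x0
    have hbig := ((((h2.const_mul φu).mul hQ).mul hq).add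
      (((((h3.const_mul φw).mul hQ).mul hq).add
        (((h3.const_mul φw).mul (hQ.const_sub 1)).mul hq)).const_mul (1 - 1))).sub
      (h0.const_mul (μa + ψ))
    refine hbig.congr_fderiv ?_
    ext y
    simp only [Lmap, pr, Matrix.cons_val_zero, ContinuousLinearMap.smul_apply,
      ContinuousLinearMap.add_apply, ContinuousLinearMap.sub_apply, ContinuousLinearMap.neg_apply,
      ContinuousLinearMap.proj_apply, smul_eq_mul, Pi.mul_apply, hv0, hv1, hv2, hv3, hv4, hv5]
    ring
  · show HasFDerivAt (fun x : Fin 6 → ℝ =>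
        1 * (φw * x 3 * (x 4 / (x 4 + x 5)) * (1 - (x 0 + x 1) / Ka)
            + φw * x 3 * (1 - x 4 / (x 4 + x 5)) * (1 - (x 0 + x 1) / Ka))
        - (μa + ψ) * x 1) (Lmap bf φw ψ μa μfu μfw μmu μmw Ka Aw 1) x0
    have hbig := (((((h3.const_mul φw).mul hQ).mul hq).add
        (((h3.const_mul φw).mul (hQ.const_sub 1)).mul hq)).const_mul (1:ℝ)).sub
      (h1.const_mul (μa + ψ))
    refine hbig.congr_fderiv ?_
    ext y
    simp only [Lmap, pr, Matrix.cons_val_zero, Matrix.cons_val_one, Matrix.head_cons,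
      ContinuousLinearMap.smul_apply,
      ContinuousLinearMap.add_apply, ContinuousLinearMap.sub_apply, ContinuousLinearMap.neg_apply,
      ContinuousLinearMap.proj_apply, smul_eq_mul, Pi.mul_apply, hv0, hv1, hv2, hv3, hv4, hv5]
    ring
  · show HasFDerivAt (fun x : Fin 6 → ℝ => bf * ψ * x 0 - μfu * x 2)
      (Lmap bf φw ψ μa μfu μfw μmu μmw Ka Aw 2) x0
    refine ((h0.const_mul (bf * ψ)).sub (h2.const_mul μfu)).congr_fderiv ?_
    ext y
    have : Lmap bf φw ψ μa μfu μfw μmu μmw Ka Aw 2 = (bf * ψ) • pr 0 + (-μfu) • pr 2 := rfl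
    rw [this]
    simp only [pr, ContinuousLinearMap.smul_apply, ContinuousLinearMap.add_apply,
      ContinuousLinearMap.sub_apply, ContinuousLinearMap.proj_apply, smul_eq_mul]
    ring
  · show HasFDerivAt (fun x : Fin 6 → ℝ => bf * ψ * x 1 - μfw * x 3)
      (Lmap bf φw ψ μa μfu μfw μmu μmw Ka Aw 3) x0
    refine ((h1.const_mul (bf * ψ)).sub (h3.const_mul μfw)).congr_fderiv ?_
    ext y
    have : Lmap bf φw ψ μa μfu μfw μmu μmw Ka Aw 3 = (bf * ψ) • pr 1 + (-μfw) • pr 3 := rfl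
    rw [this]
    simp only [pr, ContinuousLinearMap.smul_apply, ContinuousLinearMap.add_apply,
      ContinuousLinearMap.sub_apply, ContinuousLinearMap.proj_apply, smul_eq_mul]
    ring
  · show HasFDerivAt (fun x : Fin 6 → ℝ => (1 - bf) * ψ * x 0 - μmu * x 4)
      (Lmap bf φw ψ μa μfu μfw μmu μmw Ka Aw 4) x0
    refine ((h0.const_mul ((1 - bf) * ψ)).sub (h4.const_mul μmu)).congr_fderiv ?_
    ext y
    have : Lmap bf φw ψ μa μfu μfw μmu μmw Ka Aw 4 = ((1 - bf) * ψ) • pr 0 + (-μmu) • pr 4 := rfl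
    rw [this]
    simp only [pr, ContinuousLinearMap.smul_apply, ContinuousLinearMap.add_apply,
      ContinuousLinearMap.sub_apply, ContinuousLinearMap.proj_apply, smul_eq_mul]
    ring
  · show HasFDerivAt (fun x : Fin 6 → ℝ => (1 - bf) * ψ * x 1 - μmw * x 5)
      (Lmap bf φw ψ μa μfu μfw μmu μmw Ka Aw 5) x0
    refine ((h1.const_mul ((1 - bf) * ψ)).sub (h5.const_mul μmw)).congr_fderiv ?_
    ext y
    have : Lmap bf φw ψ μa μfu μfw μmu μmw Ka Aw 5 = ((1 - bf) * ψ) • pr 1 + (-μmw) • pr 5 := rfl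
    rw [this]
    simp only [pr, ContinuousLinearMap.smul_apply, ContinuousLinearMap.add_apply,
      ContinuousLinearMap.sub_apply, ContinuousLinearMap.proj_apply, smul_eq_mul]
    ring

lemma toMatrix_pi_rows (a0 c0 c1 e0 p0 q2 p1 q3 r0 q4 r1 q5 : ℝ) :
    LinearMap.toMatrix'
      (ContinuousLinearMap.pi
        ![ a0 • pr 0,
           c0 • pr 0 + c1 • pr 1 + e0 • pr 3,
           p0 • pr 0 + q2 • pr 2,
           p1 • pr 1 + q3 • pr 3,
           r0 • pr 0 + q4 • pr 4,
           r1 • pr 1 + q5 • pr 5 ]).toLinearMap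
      = Matrix.of ![![a0, 0, 0, 0, 0, 0],
          ![c0, c1, 0, e0, 0, 0],
          ![p0, 0, q2, 0, 0, 0],
          ![0, p1, 0, q3, 0, 0],
          ![r0, 0, 0, 0, q4, 0],
          ![0, r1, 0, 0, 0, q5]] := by
  ext i j
  rw [LinearMap.toMatrix'_apply]
  simp only [ContinuousLinearMap.coe_coe, ContinuousLinearMap.pi_apply]
  fin_cases i <;> fin_cases j <;>
    simp only [Matrix.of_apply, vec6_0, vec6_1, vec6_2, vec6_3, vec6_4, vec6_5,
      Fin.mk_zero, Fin.mk_one, ContinuousLinearMap.add_apply, ContinuousLinearMap.smul_apply,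
      pr_apply, smul_eq_mul, Fin.isValue] <;>
    norm_num [Fin.ext_iff, Pi.single_apply]

lemma toMatrix_Lmap (bf φw ψ μa μfu μfw μmu μmw Ka Aw : ℝ) :
    LinearMap.toMatrix'
      (ContinuousLinearMap.pi (Lmap bf φw ψ μa μfu μfw μmu μmw Ka Aw)).toLinearMap
      = Mmat bf φw ψ μa μfu μfw μmu μmw Ka Aw :=
  toMatrix_pi_rows (-(μa + ψ)) (-(φw * (bf * ψ * Aw / μfw) / Ka))
    (-(φw * (bf * ψ * Aw / μfw) / Ka) - (μa + ψ)) (φw * (1 - Aw / Ka))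
    (bf * ψ) (-μfu) (bf * ψ) (-μfw) ((1 - bf) * ψ) (-μmu) ((1 - bf) * ψ) (-μmw)

end WolbAux

/-- under complete vertical transmission (`v_w = 1`) and `R₀w > 1`,
every complex eigenvalue of the 6×6 Jacobian matrix of the Wolbachia model at
the complete-infection equilibrium has negative real part (local asymptotic
stability of the CIE). -/
theorem complete_infection_equilibrium_LAS
    (bf φu φw ψ μa μfu μfw μmu μmw Ka : ℝ)
    (hbf : 0 < bf) (hbf1 : bf < 1)
    (hφu : 0 < φu) (hφw : 0 < φw) (hψ : 0 < ψ) (hμa : 0 < μa)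
    (hμfu : 0 < μfu) (hμfw : 0 < μfw) (hμmu : 0 < μmu) (hμmw : 0 < μmw)
    (hKa : 0 < Ka)
    (hR0w : 1 < bf * ψ * φw / ((μa + ψ) * μfw))
    (Aw : ℝ) (hAw : Aw = Ka * (1 - 1 / (bf * ψ * φw / ((μa + ψ) * μfw))))
    (x0 : Fin 6 → ℝ)
    (hx0 : x0 = ![0, Aw, 0, bf * ψ * Aw / μfw, 0, (1 - bf) * ψ * Aw / μmw])
    (J : Matrix (Fin 6) (Fin 6) ℝ)
    (hJ : J = LinearMap.toMatrix' (fderiv ℝ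
        (wolbField bf 1 φu φw ψ μa μfu μfw μmu μmw Ka) x0).toLinearMap) :
    ∀ lam : ℂ, (J.map Complex.ofReal).charpoly.IsRoot lam → lam.re < 0 := by
  intro lam hroot
  by_contra hre
  push_neg at hre
  have hd : (0:ℝ) < μa + ψ := by linarith
  have hRpos : (0:ℝ) < bf * ψ * φw / ((μa + ψ) * μfw) := by positivity
  have hAwpos : 0 < Aw := by
    rw [hAw]
    have h1 : 1 / (bf * ψ * φw / ((μa + ψ) * μfw)) < 1 := by
      rw [div_lt_one hRpos]; exact hR0w
    nlinarith
  have hbm : (0:ℝ) < 1 - bf := by linarith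
  have hMwpos : 0 < (1 - bf) * ψ * Aw / μmw :=
    div_pos (mul_pos (mul_pos hbm hψ) hAwpos) hμmw
  have hcpos : 0 < φw * (bf * ψ * Aw / μfw) / Ka := by positivity
  have he : (φw * (1 - Aw / Ka)) * (bf * ψ) = (μa + ψ) * μfw := by
    rw [hAw]
    field_simp
    ring
  have hJM : J = WolbAux.Mmat bf φw ψ μa μfu μfw μmu μmw Ka Aw := by
    rw [hJ, hx0,
      (WolbAux.hasFDeriv_wolb bf φu φw ψ μa μfu μfw μmu μmw Ka Aw (ne_of_gt hMwpos)).fderiv]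
    exact WolbAux.toMatrix_Lmap bf φw ψ μa μfu μfw μmu μmw Ka Aw
  rw [hJM] at hroot
  have hdet : ((((WolbAux.Mmat bf φw ψ μa μfu μfw μmu μmw Ka Aw).map
      Complex.ofReal).charmatrix).map (Polynomial.evalRingHom lam)).det = 0 := by
    rw [← RingHom.mapMatrix_apply, ← RingHom.map_det]
    exact hroot
  obtain ⟨v, hv, hmv⟩ := Matrix.exists_mulVec_eq_zero_iff.2 hdet
  have hne : ∀ r : ℝ, 0 < r → lam + (r:ℂ) ≠ 0 := by
    intro r hr h
    have := congrArg Complex.re h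
    simp at this
    linarith
  have E0 := congrFun hmv 0
  have E1 := congrFun hmv 1
  have E2 := congrFun hmv 2
  have E3 := congrFun hmv 3
  have E4 := congrFun hmv 4
  have E5 := congrFun hmv 5
  simp only [Matrix.mulVec, dotProduct, Fin.sum_univ_six, Matrix.map_apply,
    Matrix.charmatrix_apply, Matrix.diagonal_apply, WolbAux.Mmat, Matrix.of_apply,
    WolbAux.vec6_0, WolbAux.vec6_1, WolbAux.vec6_2, WolbAux.vec6_3, WolbAux.vec6_4, WolbAux.vec6_5, Polynomial.eval_sub,
    Polynomial.eval_X, Polynomial.eval_C, Polynomial.coe_evalRingHom,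
    Pi.zero_apply, Fin.isValue] at E0 E1 E2 E3 E4 E5
  norm_num [Fin.ext_iff] at E0 E1 E2 E3 E4 E5
  have hv0 : v 0 = 0 := by
    rcases E0 with h | h
    · exact absurd (show lam + ((μa + ψ : ℝ) : ℂ) = 0 by push_cast; linear_combination h)
        (hne _ hd)
    · exact h
  rw [hv0] at E1 E2 E4
  have hv2 : v 2 = 0 := by
    have h := (mul_eq_zero.mp (show (lam + (μfu:ℂ)) * v 2 = 0 by linear_combination E2))
    exact h.resolve_left (hne _ hμfu)
  have hv4 : v 4 = 0 := by
    have h := (mul_eq_zero.mp (show (lam + (μmu:ℂ)) * v 4 = 0 by linear_combination E4))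
    exact h.resolve_left (hne _ hμmu)
  have F1 : (lam + ((φw * (bf * ψ * Aw / μfw) / Ka : ℝ):ℂ) + ((μa + ψ : ℝ):ℂ)) * v 1
      = ((φw * (1 - Aw / Ka) : ℝ):ℂ) * v 3 := by
    push_cast at E1 ⊢
    linear_combination E1
  have F3 : (lam + (μfw:ℂ)) * v 3 = ((bf * ψ : ℝ):ℂ) * v 1 := by
    push_cast at E3 ⊢
    linear_combination E3
  have F5 : (lam + (μmw:ℂ)) * v 5 = (((1 - bf) * ψ : ℝ):ℂ) * v 1 := by
    push_cast at E5 ⊢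
    linear_combination E5
  by_cases hv1 : v 1 = 0
  · have hv3 : v 3 = 0 := by
      rw [hv1, mul_zero] at F3
      exact (mul_eq_zero.mp F3).resolve_left (hne _ hμfw)
    have hv5 : v 5 = 0 := by
      rw [hv1, mul_zero] at F5
      exact (mul_eq_zero.mp F5).resolve_left (hne _ hμmw)
    exact hv (funext fun i => by
      fin_cases i
      · exact hv0
      · exact hv1
      · exact hv2
      · exact hv3
      · exact hv4
      · exact hv5)
  · have h6 : ((lam + ((φw * (bf * ψ * Aw / μfw) / Ka : ℝ):ℂ) + ((μa + ψ : ℝ):ℂ))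
        * (lam + (μfw:ℂ)) - ((φw * (1 - Aw / Ka) : ℝ):ℂ) * ((bf * ψ : ℝ):ℂ)) * v 1 = 0 := by
      linear_combination (lam + (μfw:ℂ)) * F1 + ((φw * (1 - Aw / Ka) : ℝ):ℂ) * F3
    have h7 := (mul_eq_zero.mp h6).resolve_right hv1
    have heC : ((φw * (1 - Aw / Ka) : ℝ):ℂ) * ((bf * ψ : ℝ):ℂ)
        = ((μa + ψ : ℝ):ℂ) * ((μfw : ℝ):ℂ) := by
      exact_mod_cast congrArg Complex.ofReal he
    have hquad : lam ^ 2
        + ((φw * (bf * ψ * Aw / μfw) / Ka + (μa + ψ) + μfw : ℝ):ℂ) * lam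
        + ((φw * (bf * ψ * Aw / μfw) / Ka * μfw : ℝ):ℂ) = 0 := by
      push_cast at h7 heC ⊢
      linear_combination h7 + heC
    have hlt := WolbAux.quad_root_re_neg
      (p := φw * (bf * ψ * Aw / μfw) / Ka + (μa + ψ) + μfw)
      (q := φw * (bf * ψ * Aw / μfw) / Ka * μfw)
      (by linarith) (mul_pos hcpos hμfw) hquad
    linarith
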